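/- Let F ⊆ ℝ² be a semi-algebraic set, written as a finite union F = ⋃_{i=1}^k (F_i ∩ G_{i,1} ∩ ⋯ ∩ G_{i,j(i)}) with F_i = {x : P_i(x) = 0} and G_{i,j} = {x : Q_{i,j}(x) > 0} for real polynomials P_i, Q_{i,j}. Suppose σ : [0,∞) → ℝ satisfies σ(r) = sup{s : (r,s) ∈ F} and this supremum is finite for every r. Then there is a nonzero real polynomial V in two variables such that V(r, σ(r)) = 0 for all r ∈ [0,∞). -/

import Mathlib

open MvPolynomial

/-- If F ⊆ ℝ² is given as a finite union F = ⋃ᵢ (Fᵢ ∩ G_{i,1} ∩ ⋯ ∩ G_{i,j(i)}) with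
Fᵢ = {P_i = 0} and G_{i,j} = {Q_{i,j} > 0}, and σ(r) is the (finite) supremum of the
fiber {s : (r,s) ∈ F} for every r ≥ 0, then there is a nonzero real polynomial V in
two variables with V(r, σ(r)) = 0 for all r ≥ 0. -/
theorem stmt13 (k : ℕ) (j : Fin k → ℕ)
    (P : Fin k → MvPolynomial (Fin 2) ℝ)
    (Q : (i : Fin k) → Fin (j i) → MvPolynomial (Fin 2) ℝ)
    (F : Set (Fin 2 → ℝ))
    (hF : F = ⋃ i : Fin k,
      ({x : Fin 2 → ℝ | MvPolynomial.eval x (P i) = 0} ∩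
        ⋂ l : Fin (j i), {x : Fin 2 → ℝ | 0 < MvPolynomial.eval x (Q i l)}))
    (σ : ℝ → ℝ)
    (hσ : ∀ r : ℝ, 0 ≤ r → IsLUB {s : ℝ | ![r, s] ∈ F} (σ r)) :
    ∃ V : MvPolynomial (Fin 2) ℝ, V ≠ 0 ∧
      ∀ r : ℝ, 0 ≤ r → MvPolynomial.eval ![r, σ r] V = 0 := by
  classical
  set f : Fin k → MvPolynomial (Fin 2) ℝ := fun i =>
    if P i = 0 then (if ∃ l, Q i l = 0 then 1 else ∏ l, Q i l) else P i with hf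
  refine ⟨∏ i, f i, ?_, ?_⟩
  · rw [Finset.prod_ne_zero_iff]
    intro i _
    simp only [hf]
    split_ifs with h1 h2
    · exact one_ne_zero
    · rw [Finset.prod_ne_zero_iff]
      exact fun l _ h => h2 ⟨l, h⟩
    · exact h1
  · intro r hr
    have hlub := hσ r hr
    -- continuity of partial evaluation
    have hcv : Continuous fun s : ℝ => (![r, s] : Fin 2 → ℝ) := by
      apply continuous_pi
      intro i
      fin_cases i
      · simpa using continuous_const
      · simpa using continuous_id'
    have hc : ∀ p : MvPolynomial (Fin 2) ℝ,
        Continuous fun s : ℝ => MvPolynomial.eval ![r, s] p := fun p =>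
      (MvPolynomial.continuous_eval (p := p)).comp hcv
    -- the fiber
    set S : Fin k → Set ℝ := fun i =>
      {s : ℝ | MvPolynomial.eval ![r, s] (P i) = 0 ∧
        ∀ l, 0 < MvPolynomial.eval ![r, s] (Q i l)} with hS
    have hfib : {s : ℝ | ![r, s] ∈ F} = ⋃ i, S i := by
      rw [hF]
      ext s
      simp [hS, Set.mem_iUnion, Set.mem_iInter]
    have hne : {s : ℝ | ![r, s] ∈ F}.Nonempty := by
      by_contra h
      rw [Set.not_nonempty_iff_eq_empty] at h
      rw [h] at hlub
      have : σ r ≤ σ r - 1 := hlub.2 (fun s hs => hs.elim)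
      linarith
    have hcl : σ r ∈ ⋃ i, closure (S i) := by
      rw [← closure_iUnion_of_finite, ← hfib]
      exact hlub.mem_closure hne
    obtain ⟨_, ⟨i, rfl⟩, hi'⟩ := hcl
    have hi : σ r ∈ closure (S i) := hi'
    rw [map_prod]
    by_cases hP : P i = 0
    · -- piece with zero equation polynomial
      by_cases hQ : ∃ l, Q i l = 0
      · exfalso
        obtain ⟨l, hl⟩ := hQ
        have : S i = ∅ := by
          ext s
          simp only [hS, Set.mem_setOf_eq, Set.mem_empty_iff_false, iff_false]
          rintro ⟨-, h2⟩
          have := h2 l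
          rw [hl] at this
          simp at this
        rw [this, closure_empty] at hi
        exact hi
      · -- all Q i l nonzero; show some Q vanishes at (r, σ r)
        have hge : ∀ l, 0 ≤ MvPolynomial.eval ![r, σ r] (Q i l) := by
          intro l
          have : closure (S i) ⊆ {s | 0 ≤ MvPolynomial.eval ![r, s] (Q i l)} :=
            closure_minimal (fun s hs => (hs.2 l).le)
              (isClosed_le continuous_const (hc _))
          exact this hi
        have hex : ∃ l, MvPolynomial.eval ![r, σ r] (Q i l) = 0 := by
          by_contra hall
          push_neg at hall
          have hpos : ∀ l, 0 < MvPolynomial.eval ![r, σ r] (Q i l) :=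
            fun l => lt_of_le_of_ne (hge l) (Ne.symm (hall l))
          have hopen : IsOpen (⋂ l, {s : ℝ | 0 < MvPolynomial.eval ![r, s] (Q i l)}) :=
            isOpen_iInter_of_finite fun l => isOpen_lt continuous_const (hc _)
          have hmem : σ r ∈ ⋂ l, {s : ℝ | 0 < MvPolynomial.eval ![r, s] (Q i l)} := by
            simpa [Set.mem_iInter] using hpos
          obtain ⟨ε, hε, hball⟩ := Metric.mem_nhds_iff.1 (hopen.mem_nhds hmem)
          have hsmem : σ r + ε / 2 ∈ ⋂ l, {s : ℝ | 0 < MvPolynomial.eval ![r, s] (Q i l)} := by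
            apply hball
            rw [Metric.mem_ball, Real.dist_eq,
              show σ r + ε / 2 - σ r = ε / 2 by ring, abs_of_pos (half_pos hε)]
            linarith
          have : σ r + ε / 2 ∈ {s : ℝ | ![r, s] ∈ F} := by
            rw [hfib]
            exact Set.mem_iUnion.2 ⟨i, by
              refine ⟨by rw [hP]; simp, ?_⟩
              intro l
              exact Set.mem_iInter.1 hsmem l⟩
          have := hlub.1 this
          linarith
        obtain ⟨l, hl⟩ := hex
        apply Finset.prod_eq_zero (Finset.mem_univ i)
        rw [hf]
        simp only [if_pos hP, if_neg hQ, map_prod]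
        exact Finset.prod_eq_zero (Finset.mem_univ l) hl
    · -- P i nonzero: it vanishes at (r, σ r) by continuity
      have hPz : MvPolynomial.eval ![r, σ r] (P i) = 0 := by
        have : closure (S i) ⊆ {s | MvPolynomial.eval ![r, s] (P i) = 0} :=
          closure_minimal (fun s hs => hs.1) (isClosed_eq (hc _) continuous_const)
        exact this hi
      apply Finset.prod_eq_zero (Finset.mem_univ i)
      rw [hf]
      simp only [if_neg hP]
      exact hPz
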